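/- The trace-based coefficient c_k = Tr(A^k ⊕ c_1 ⊗ A^{k-1} ⊕ ⋯ ⊕ c_{k-1} ⊗ A) of the Faddeev-LeVerrier-style min-plus characteristic polynomial equals the minimum total weight over all (not necessarily disjoint) collections of closed walks in 𝒩(A) whose lengths sum to k. -/

import Mathlib

open Finset

/-- Tropical (min-plus) matrix product. -/
def tmul {n : ℕ} (A B : Matrix (Fin n) (Fin n) (WithTop ℝ)) :
    Matrix (Fin n) (Fin n) (WithTop ℝ) :=
  fun i j => Finset.univ.inf fun l => A i l + B l j

/-- Tropical matrix power (`A¹ = A`, `A^{k+1} = A^k ⊗ A`). -/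
def tpow {n : ℕ} (A : Matrix (Fin n) (Fin n) (WithTop ℝ)) : ℕ →
    Matrix (Fin n) (Fin n) (WithTop ℝ)
  | 0 => fun i j => if i = j then 0 else ⊤
  | k + 1 => tmul (tpow A k) A

/-- Tropical trace: the minimum of the diagonal entries. -/
def tTrace {n : ℕ} (M : Matrix (Fin n) (Fin n) (WithTop ℝ)) : WithTop ℝ :=
  Finset.univ.inf fun i => M i i

/-- `w` is the total weight of a collection of (not necessarily disjoint) closed
walks in the network of `A` whose lengths sum to `k`. -/
def IsClosedWalkCollWeight {n : ℕ} (A : Matrix (Fin n) (Fin n) (WithTop ℝ))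
    (k : ℕ) (w : WithTop ℝ) : Prop :=
  ∃ (m : ℕ) (s : Fin m → ℕ) (f : Fin m → ℕ → Fin n),
    (∀ i, 0 < s i) ∧ (∑ i, s i) = k ∧
    (∀ i, f i (s i) = f i 0) ∧
    w = ∑ i, ∑ t ∈ range (s i), A (f i t) (f i (t + 1))

/-- The Faddeev–LeVerrier-style min-plus coefficients
`c_k = Tr(A^k ⊕ c₁ ⊗ A^{k-1} ⊕ ⋯ ⊕ c_{k-1} ⊗ A)` (with `c₀ = 0`): for each
`k ≥ 1`, `c_k` is the minimum total weight over all collections of closed walks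
in the network of `A` whose lengths sum to `k`. -/
lemma tpow_le_walk {n : ℕ} (A : Matrix (Fin n) (Fin n) (WithTop ℝ)) :
    ∀ (k : ℕ) (f : ℕ → Fin n),
    tpow A k (f 0) (f k) ≤ ∑ t ∈ range k, A (f t) (f (t + 1)) := by
  intro k
  induction k with
  | zero => intro f; simp [tpow]
  | succ k ih =>
    intro f
    rw [Finset.sum_range_succ]
    calc tpow A (k+1) (f 0) (f (k+1))
        ≤ tpow A k (f 0) (f k) + A (f k) (f (k+1)) :=
          Finset.inf_le (Finset.mem_univ (f k))
      _ ≤ _ := add_le_add_left (ih f) _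

lemma exists_walk {n : ℕ} (A : Matrix (Fin n) (Fin n) (WithTop ℝ)) :
    ∀ (k : ℕ) (i j : Fin n), tpow A k i j ≠ ⊤ →
    ∃ f : ℕ → Fin n, f 0 = i ∧ f k = j ∧
      tpow A k i j = ∑ t ∈ range k, A (f t) (f (t + 1)) := by
  intro k
  induction k with
  | zero =>
    intro i j h
    by_cases hij : i = j
    · exact ⟨fun _ => i, rfl, hij ▸ rfl, by simp [tpow, hij]⟩
    · simp [tpow, hij] at h
  | succ k ih =>
    intro i j h
    obtain ⟨l, -, hl⟩ := Finset.exists_mem_eq_inf Finset.univ ⟨i, Finset.mem_univ i⟩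
      (fun l => tpow A k i l + A l j)
    have hl' : tpow A (k+1) i j = tpow A k i l + A l j := hl
    have hk : tpow A k i l ≠ ⊤ := by
      intro ht; apply h; rw [hl', ht, top_add]
    obtain ⟨g, hg0, hgk, hgs⟩ := ih i l hk
    refine ⟨fun t => if t ≤ k then g t else j, by simpa using hg0, by simp, ?_⟩
    rw [Finset.sum_range_succ, hl', hgs]
    congr 1
    · apply Finset.sum_congr rfl
      intro t ht
      have ht' : t < k := Finset.mem_range.mp ht
      have h1 : t ≤ k := Nat.le_of_lt ht'
      have h2 : t + 1 ≤ k := ht'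
      simp [h1, h2]
    · simp [hgk]

lemma exists_closed_walk {n : ℕ} (hn : 0 < n) (A : Matrix (Fin n) (Fin n) (WithTop ℝ))
    (k : ℕ) (i : Fin n) :
    ∃ f : ℕ → Fin n, f 0 = i ∧ f k = i ∧
      tpow A k i i = ∑ t ∈ range k, A (f t) (f (t + 1)) := by
  by_cases h : tpow A k i i = ⊤
  · refine ⟨fun _ => i, rfl, rfl, ?_⟩
    have h2 := tpow_le_walk A k (fun _ => i)
    rw [h] at h2 ⊢
    exact (top_le_iff.mp h2).symm
  · exact exists_walk A k i i h

section main
variable {n : ℕ} (A : Matrix (Fin n) (Fin n) (WithTop ℝ)) (c : ℕ → WithTop ℝ)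

lemma flv_lb (hc0 : c 0 = 0)
    (hc : ∀ k, c (k + 1) =
      tTrace fun i j => (range (k + 1)).inf fun m => c m + tpow A (k + 1 - m) i j) :
    ∀ (m : ℕ) (s : Fin m → ℕ) (f : Fin m → ℕ → Fin n),
      (∀ i, 0 < s i) → (∀ i, f i (s i) = f i 0) →
      c (∑ i, s i) ≤ ∑ i, ∑ t ∈ range (s i), A (f i t) (f i (t + 1)) := by
  intro m
  induction m with
  | zero => intro s f _ _; simp [hc0]
  | succ m ih =>
    intro s f hs hf
    rw [Fin.sum_univ_succ, Fin.sum_univ_succ]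
    set R := ∑ i : Fin m, s i.succ with hR
    obtain ⟨l', hl'⟩ := Nat.exists_eq_succ_of_ne_zero (Nat.pos_iff_ne_zero.mp (hs 0))
    have hK : s 0 + R = (l' + R) + 1 := by omega
    have step1 : c (s 0 + R) ≤ c R + tpow A (s 0) (f 0 0) (f 0 0) := by
      rw [hK, hc (l' + R)]
      have t1 : tTrace (fun i j => (range (l' + R + 1)).inf
          fun m => c m + tpow A (l' + R + 1 - m) i j) ≤
          (range (l' + R + 1)).inf fun m => c m + tpow A (l' + R + 1 - m) (f 0 0) (f 0 0) :=
        Finset.inf_le (Finset.mem_univ _)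
      have t2 : ((range (l' + R + 1)).inf
          fun m => c m + tpow A (l' + R + 1 - m) (f 0 0) (f 0 0)) ≤
          c R + tpow A (l' + R + 1 - R) (f 0 0) (f 0 0) :=
        Finset.inf_le (Finset.mem_range.mpr (by omega))
      have : l' + R + 1 - R = s 0 := by omega
      rw [this] at t2
      exact le_trans t1 t2
    have step2 : tpow A (s 0) (f 0 0) (f 0 0) ≤
        ∑ t ∈ range (s 0), A (f 0 t) (f 0 (t + 1)) := by
      have := tpow_le_walk A (s 0) (f 0)
      rwa [hf 0] at this
    have step3 : c R ≤ ∑ i : Fin m, ∑ t ∈ range (s i.succ), A (f i.succ t) (f i.succ (t + 1)) :=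
      ih (fun i => s i.succ) (fun i => f i.succ) (fun i => hs i.succ) (fun i => hf i.succ)
    calc c (s 0 + R) ≤ c R + tpow A (s 0) (f 0 0) (f 0 0) := step1
      _ ≤ (∑ i : Fin m, ∑ t ∈ range (s i.succ), A (f i.succ t) (f i.succ (t + 1)))
          + ∑ t ∈ range (s 0), A (f 0 t) (f 0 (t + 1)) := add_le_add step3 step2
      _ = _ := add_comm _ _

lemma flv_mem (hn : 0 < n) (hc0 : c 0 = 0)
    (hc : ∀ k, c (k + 1) =
      tTrace fun i j => (range (k + 1)).inf fun m => c m + tpow A (k + 1 - m) i j) :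
    ∀ k, IsClosedWalkCollWeight A k (c k) := by
  intro k
  induction k using Nat.strong_induction_on with
  | _ k ih =>
    match k with
    | 0 =>
      exact ⟨0, Fin.elim0, Fin.elim0, fun i => i.elim0, by simp, fun i => i.elim0,
        by simp [hc0]⟩
    | k + 1 =>
      have i0 : Fin n := ⟨0, hn⟩
      obtain ⟨i, -, hi⟩ := Finset.exists_mem_eq_inf Finset.univ ⟨i0, Finset.mem_univ i0⟩
        (fun i => (range (k + 1)).inf fun m => c m + tpow A (k + 1 - m) i i)
      obtain ⟨r, hr, hrr⟩ := Finset.exists_mem_eq_inf (range (k + 1))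
        ⟨0, Finset.mem_range.mpr (Nat.succ_pos k)⟩
        (fun m => c m + tpow A (k + 1 - m) i i)
      have hrk : r < k + 1 := Finset.mem_range.mp hr
      have hck : c (k + 1) = c r + tpow A (k + 1 - r) i i := by
        rw [hc k]; exact hi.trans hrr
      obtain ⟨g, hg0, hgl, hgs⟩ := exists_closed_walk hn A (k + 1 - r) i
      obtain ⟨m, s, F, h1, h2, h3, h4⟩ := ih r hrk
      refine ⟨m + 1, Fin.cons (k + 1 - r) s, Fin.cons g F, ?_, ?_, ?_, ?_⟩
      · intro j
        refine Fin.cases ?_ ?_ j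
        · simpa using Nat.sub_pos_of_lt hrk
        · intro j; simpa using h1 j
      · rw [Fin.sum_cons, h2]; omega
      · intro j
        refine Fin.cases ?_ ?_ j
        · simpa using hgl.trans hg0.symm
        · intro j; simpa using h3 j
      · rw [Fin.sum_univ_succ, hck]
        simp only [Fin.cons_zero, Fin.cons_succ]
        rw [← hgs, ← h4, add_comm]
end main

theorem flv_coeff_eq_min_closed_walk_collections {n : ℕ} (hn : 0 < n)
    (A : Matrix (Fin n) (Fin n) (WithTop ℝ)) (c : ℕ → WithTop ℝ)
    (hc0 : c 0 = 0)
    (hc : ∀ k, c (k + 1) =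
      tTrace fun i j => (range (k + 1)).inf fun m => c m + tpow A (k + 1 - m) i j) :
    ∀ k, 1 ≤ k → IsLeast {w : WithTop ℝ | IsClosedWalkCollWeight A k w} (c k) := by
  intro k _
  constructor
  · exact flv_mem A c hn hc0 hc k
  · rintro w ⟨m, s, f, h1, h2, h3, h4⟩
    rw [h4, ← h2]
    exact flv_lb A c hc0 hc m s f h1 h3
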